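/- Let k ∈ L¹([0,∞);ℝ) and suppose its integral resolvent r_k, i.e. the function satisfying r_k(t) = k(t) + ∫₀ᵗ r_k(t−s) k(s) ds for almost every t ≥ 0, satisfies r_k ∈ L¹([0,∞);ℝ). Let f : [0,∞) → ℝ be locally integrable and define x(t) = f(t) + ∫₀ᵗ r_k(t−s) f(s) ds. Then x has a Cesàro limit if and only if f has a Cesàro limit; moreover, if (1/t)∫₀ᵗ f(s) ds → L as t → ∞ then (1/t)∫₀ᵗ x(s) ds → L·(1 + ∫₀^∞ r_k(s) ds) as t → ∞. -/
import Mathlib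

open MeasureTheory Filter Set
open scoped Topology

namespace Stmt19Aux

lemma ae_ne_zero : ∀ᵐ c : ℝ, c ≠ (0:ℝ) := by
  rw [ae_iff]
  have : {c : ℝ | ¬ c ≠ 0} = {0} := by ext c; simp
  rw [this]
  exact measure_singleton 0

lemma ae_zero_Ioc {φ : ℝ → ℝ} (h0 : ∀ v < (0:ℝ), φ v = 0) {a b : ℝ} (hb : b ≤ 0) :
    φ =ᵐ[volume.restrict (Ioc a b)] 0 := by
  filter_upwards [ae_restrict_mem measurableSet_Ioc, ae_restrict_of_ae ae_ne_zero]
    with c hc hne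
  exact h0 c (lt_of_le_of_ne (hc.2.trans hb) hne)

lemma integrableOn_zero_of_neg {φ : ℝ → ℝ} (h0 : ∀ v < (0:ℝ), φ v = 0) {a b : ℝ}
    (hb : b ≤ 0) : IntegrableOn φ (Ioc a b) :=
  (integrable_zero _ _ _).congr (ae_zero_Ioc h0 hb).symm

lemma setIntegral_zero_of_neg {φ : ℝ → ℝ} (h0 : ∀ v < (0:ℝ), φ v = 0) {a b : ℝ}
    (hb : b ≤ 0) : ∫ c in Ioc a b, φ c = 0 := by
  rw [integral_congr_ae (ae_zero_Ioc h0 hb)]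
  simp

/-- Shrinking the domain of a set integral when the integrand vanishes beyond `s`. -/
lemma setIntegral_shrink {φ : ℝ → ℝ} {s t : ℝ} (hst : s ≤ t)
    (h0 : ∀ u, s < u → φ u = 0) :
    ∫ u in Ioc 0 t, φ u = ∫ u in Ioc 0 s, φ u := by
  have h1 : ∀ u ∈ Ioc (0:ℝ) t, φ u = (Ioc (0:ℝ) s).indicator φ u := by
    intro u hu
    by_cases h : u ∈ Ioc (0:ℝ) s
    · rw [indicator_of_mem h]
    · rw [indicator_of_notMem h, h0 u]
      by_contra hc
      exact h ⟨hu.1, not_lt.mp hc⟩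
  rw [setIntegral_congr_fun measurableSet_Ioc h1, integral_indicator measurableSet_Ioc,
    Measure.restrict_restrict measurableSet_Ioc, Ioc_inter_Ioc]
  norm_num [min_eq_left hst]

/-- Continuity of the primitive `w ↦ ∫_{(0,w]} φ`. -/
lemma continuous_prim (φ : ℝ → ℝ) (hφ : ∀ T : ℝ, IntegrableOn φ (Ioc 0 T)) :
    Continuous fun w => ∫ u in Ioc 0 w, φ u := by
  rw [continuous_iff_continuousAt]
  intro w₀
  set T := w₀ + 1 with hTdef
  have hT : w₀ < T := by simp [hTdef]
  set ψ := (Ioc (0:ℝ) T).indicator φ with hψdef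
  have hψ : Integrable ψ := (hφ T).integrable_indicator measurableSet_Ioc
  have key : ∀ w ≤ T, ∫ u in Ioc 0 w, φ u = ∫ u in (-1:ℝ)..w, ψ u := by
    intro w hw
    rcases le_or_gt (-1:ℝ) w with hw1 | hw1
    · rw [intervalIntegral.integral_of_le hw1, integral_indicator measurableSet_Ioc,
        Measure.restrict_restrict measurableSet_Ioc, Ioc_inter_Ioc]
      norm_num [min_eq_right hw]
    · rw [intervalIntegral.integral_of_ge hw1.le]
      have e1 : Ioc (0:ℝ) w = ∅ := Ioc_eq_empty (by linarith)
      have e2 : ∀ u ∈ Ioc w (-1:ℝ), ψ u = 0 := by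
        intro u hu
        apply indicator_of_notMem
        intro hmem
        have := hmem.1
        have := hu.2
        linarith
      rw [e1, setIntegral_congr_fun measurableSet_Ioc e2]
      simp
  have hcont : ContinuousAt (fun w => ∫ u in (-1:ℝ)..w, ψ u) w₀ :=
    (hψ.continuous_primitive (-1)).continuousAt
  apply hcont.congr
  filter_upwards [Iio_mem_nhds hT] with w hw
  exact (key w (le_of_lt hw)).symm

/-- a.e. equality is preserved by reflection `s ↦ u - s`. -/
lemma ae_comp_sub {φ ψ : ℝ → ℝ} (h : φ =ᵐ[volume.restrict (Ici 0)] ψ) (u : ℝ) :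
    (fun s => φ (u - s)) =ᵐ[volume.restrict (Ioc 0 u)] (fun s => ψ (u - s)) := by
  have h' : ∀ᵐ v ∂(volume : Measure ℝ), v ∈ Ici (0:ℝ) → φ v = ψ v :=
    (ae_restrict_iff' measurableSet_Ici).mp h
  have h2 : ∀ᵐ s ∂(volume : Measure ℝ), (u - s) ∈ Ici (0:ℝ) → φ (u - s) = ψ (u - s) :=
    (Measure.measurePreserving_sub_left (volume : Measure ℝ) u).quasiMeasurePreserving.ae h'
  filter_upwards [ae_restrict_of_ae h2, ae_restrict_mem measurableSet_Ioc] with s hs hmem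
  exact hs (by simp only [mem_Ici, sub_nonneg]; exact hmem.2)

end Stmt19Aux


namespace Stmt19Aux

variable {A W : ℝ → ℝ}

/-- Interval integrability of `A` on `[-b, t-b]` when `A` vanishes on negatives. -/
lemma intervalIntegrable_neg_ext (hA0 : ∀ v < (0:ℝ), A v = 0)
    (hAi : ∀ T : ℝ, IntegrableOn A (Ioc 0 T)) {b t : ℝ} (hb : 0 ≤ b) (hbt : b ≤ t) :
    IntervalIntegrable A volume (-b) (t - b) := by
  have h1 : IntervalIntegrable A volume (-b) 0 :=
    (intervalIntegrable_iff_integrableOn_Ioc_of_le (by linarith)).mpr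
      (integrableOn_zero_of_neg hA0 le_rfl)
  have h2 : IntervalIntegrable A volume 0 (t - b) :=
    (intervalIntegrable_iff_integrableOn_Ioc_of_le (by linarith)).mpr (hAi _)
  exact h1.trans h2

/-- Integrability of the shift `a ↦ A (a - b)` on `(0, t]`. -/
lemma integrableOn_shift (hA0 : ∀ v < (0:ℝ), A v = 0)
    (hAi : ∀ T : ℝ, IntegrableOn A (Ioc 0 T)) {b t : ℝ} (hb : 0 ≤ b) (hbt : b ≤ t) :
    IntegrableOn (fun a => A (a - b)) (Ioc 0 t) := by
  have h := (intervalIntegrable_neg_ext hA0 hAi hb hbt).comp_sub_right b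
  rw [neg_add_cancel, sub_add_cancel] at h
  exact (intervalIntegrable_iff_integrableOn_Ioc_of_le (by linarith)).mp h

/-- Integrability of `A c * W (c + b)` on `(0, s]` for continuous `W`. -/
lemma integrableOn_mul_contshift (hAi : ∀ T : ℝ, IntegrableOn A (Ioc 0 T))
    (hW : Continuous W) (b s : ℝ) :
    IntegrableOn (fun c => A c * W (c + b)) (Ioc 0 s) :=
  IntegrableOn.mul_continuousOn_of_subset (hAi s)
    ((hW.comp (continuous_id.add continuous_const)).continuousOn)
    measurableSet_Ioc isCompact_Icc Ioc_subset_Icc_self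

/-- Translation identity for set integrals, using vanishing of `A` on negatives. -/
lemma shift_integral (hA0 : ∀ v < (0:ℝ), A v = 0)
    (hAi : ∀ T : ℝ, IntegrableOn A (Ioc 0 T)) (hW : Continuous W)
    {b t : ℝ} (hb : 0 ≤ b) (hbt : b ≤ t) :
    ∫ a in Ioc 0 t, A (a - b) * W a = ∫ c in Ioc 0 (t - b), A c * W (c + b) := by
  set f₀ : ℝ → ℝ := fun c => A c * W (c + b) with hf₀
  have e1 : ∫ a in (0:ℝ)..t, A (a - b) * W a = ∫ a in (0:ℝ)..t, f₀ (a - b) := by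
    apply intervalIntegral.integral_congr
    intro a _
    simp [hf₀, sub_add_cancel]
  have e2 : (∫ a in (0:ℝ)..t, f₀ (a - b)) = ∫ c in (0 - b)..(t - b), f₀ c :=
    intervalIntegral.integral_comp_sub_right f₀ b
  have i1 : IntervalIntegrable f₀ volume (-b) 0 :=
    (intervalIntegrable_iff_integrableOn_Ioc_of_le (by linarith)).mpr
      (integrableOn_zero_of_neg (fun v hv => by simp [hf₀, hA0 v hv]) le_rfl)
  have i2 : IntervalIntegrable f₀ volume 0 (t - b) :=
    (intervalIntegrable_iff_integrableOn_Ioc_of_le (by linarith)).mpr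
      (integrableOn_mul_contshift hAi hW b (t - b))
  have e3 : (∫ c in (-b:ℝ)..0, f₀ c) + (∫ c in (0:ℝ)..(t - b), f₀ c)
      = ∫ c in (-b:ℝ)..(t - b), f₀ c :=
    intervalIntegral.integral_add_adjacent_intervals i1 i2
  have e4 : (∫ c in (-b:ℝ)..0, f₀ c) = 0 := by
    rw [intervalIntegral.integral_of_le (by linarith)]
    exact setIntegral_zero_of_neg (fun v hv => by simp [hf₀, hA0 v hv]) le_rfl
  calc ∫ a in Ioc 0 t, A (a - b) * W a
      = ∫ a in (0:ℝ)..t, A (a - b) * W a :=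
        (intervalIntegral.integral_of_le (by linarith : (0:ℝ) ≤ t)).symm
    _ = ∫ a in (0:ℝ)..t, f₀ (a - b) := e1
    _ = ∫ c in (0 - b)..(t - b), f₀ c := e2
    _ = ∫ c in (-b:ℝ)..(t - b), f₀ c := by rw [zero_sub]
    _ = (∫ c in (-b:ℝ)..0, f₀ c) + ∫ c in (0:ℝ)..(t - b), f₀ c := e3.symm
    _ = ∫ c in (0:ℝ)..(t - b), f₀ c := by rw [e4, zero_add]
    _ = ∫ c in Ioc 0 (t - b), f₀ c :=
        intervalIntegral.integral_of_le (by linarith : (0:ℝ) ≤ t - b)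

end Stmt19Aux

namespace Stmt19Aux

variable {A B W : ℝ → ℝ} {t : ℝ}

/-- The integrand of the double convolution integral. -/
lemma master_aesm (hASM : StronglyMeasurable A) (hBSM : StronglyMeasurable B)
    (hW : Continuous W) {μ : Measure (ℝ × ℝ)} :
    AEStronglyMeasurable (fun p : ℝ × ℝ => A (p.1 - p.2) * B p.2 * W p.1) μ :=
  (((hASM.comp_measurable (measurable_fst.sub measurable_snd)).mul
    (hBSM.comp_measurable measurable_snd)).mul
    (hW.stronglyMeasurable.comp_measurable measurable_fst)).aestronglyMeasurable

lemma master_int (hASM : StronglyMeasurable A) (hBSM : StronglyMeasurable B)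
    (hA0 : ∀ v < (0:ℝ), A v = 0)
    (hAi : ∀ T : ℝ, IntegrableOn A (Ioc 0 T)) (hBi : ∀ T : ℝ, IntegrableOn B (Ioc 0 T))
    (hW : Continuous W) (ht : 0 ≤ t) :
    Integrable (fun p : ℝ × ℝ => A (p.1 - p.2) * B p.2 * W p.1)
      ((volume.restrict (Ioc 0 t)).prod (volume.restrict (Ioc 0 t))) := by
  set ν := volume.restrict (Ioc (0:ℝ) t) with hν
  obtain ⟨C, hC⟩ := (isCompact_Icc (a := (0:ℝ)) (b := t)).exists_bound_of_continuousOn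
    hW.continuousOn
  have hC0 : 0 ≤ C := le_trans (norm_nonneg _) (hC 0 ⟨le_rfl, ht⟩)
  set IA := ∫ c in Ioc (0:ℝ) t, |A c| with hIA
  have hIA0 : 0 ≤ IA := integral_nonneg fun c => abs_nonneg _
  have habs0 : ∀ v < (0:ℝ), |A v| = 0 := fun v hv => by simp [hA0 v hv]
  have habsi : ∀ T : ℝ, IntegrableOn (fun v => |A v|) (Ioc 0 T) := fun T => (hAi T).abs
  refine (integrable_prod_iff' (master_aesm hASM hBSM hW)).mpr ⟨?_, ?_⟩
  · -- sections are integrable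
    filter_upwards [ae_restrict_mem measurableSet_Ioc] with b hb
    have h1 : IntegrableOn (fun a => A (a - b) * W a) (Ioc 0 t) :=
      IntegrableOn.mul_continuousOn_of_subset (integrableOn_shift hA0 hAi hb.1.le hb.2)
        hW.continuousOn measurableSet_Ioc isCompact_Icc Ioc_subset_Icc_self
    have h2 : Integrable (fun a => A (a - b) * B b * W a) ν :=
      (h1.mul_const (B b)).congr (Eventually.of_forall (fun a => by ring))
    exact h2
  · -- integral of norms is integrable
    have hQ : AEStronglyMeasurable
        (fun p : ℝ × ℝ => ‖A (p.2 - p.1) * B p.1 * W p.2‖) (ν.prod ν) :=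
      ((((hASM.comp_measurable (measurable_snd.sub measurable_fst)).mul
        (hBSM.comp_measurable measurable_fst)).mul
        (hW.stronglyMeasurable.comp_measurable measurable_snd)).norm).aestronglyMeasurable
    have hmeas : AEStronglyMeasurable
        (fun b => ∫ a, ‖A (a - b) * B b * W a‖ ∂ν) ν :=
      hQ.integral_prod_right'
    refine Integrable.mono' (((hBi t).abs.const_mul (IA * C)) : Integrable _ ν) hmeas ?_
    filter_upwards [ae_restrict_mem measurableSet_Ioc] with b hb
    have key : ∀ a ∈ Ioc (0:ℝ) t, ‖A (a - b) * B b * W a‖ ≤ |A (a - b)| * (|B b| * C) := by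
      intro a ha
      have : ‖A (a - b) * B b * W a‖ = |A (a - b)| * |B b| * |W a| := by
        simp [abs_mul]
      rw [this]
      rw [mul_assoc]
      refine mul_le_mul_of_nonneg_left ?_ (abs_nonneg _)
      exact mul_le_mul_of_nonneg_left ((hC a ⟨ha.1.le, ha.2⟩)) (abs_nonneg _)
    have hgi : Integrable (fun a => |A (a - b)| * (|B b| * C)) ν :=
      (integrableOn_shift habs0 habsi hb.1.le hb.2).mul_const _
    have step1 : (∫ a, ‖A (a - b) * B b * W a‖ ∂ν)
        ≤ ∫ a, |A (a - b)| * (|B b| * C) ∂ν := by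
      refine integral_mono_of_nonneg (Eventually.of_forall fun a => norm_nonneg _) hgi ?_
      filter_upwards [ae_restrict_mem measurableSet_Ioc] with a ha using key a ha
    have step2 : (∫ a, |A (a - b)| * (|B b| * C) ∂ν) = (∫ a in Ioc 0 (t - b), |A a|) * (|B b| * C) := by
      rw [integral_mul_const]
      congr 1
      have := shift_integral habs0 habsi continuous_const (W := fun _ => (1:ℝ))
        hb.1.le hb.2
      simpa using this
    have step3 : (∫ a in Ioc 0 (t - b), |A a|) ≤ IA := by
      refine setIntegral_mono_set (habsi t) (Eventually.of_forall fun c => abs_nonneg _) ?_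
      exact HasSubset.Subset.eventuallyLE (Ioc_subset_Ioc le_rfl (by linarith [hb.1]))
    have : (∫ a, ‖A (a - b) * B b * W a‖ ∂ν) ≤ IA * (|B b| * C) := by
      calc (∫ a, ‖A (a - b) * B b * W a‖ ∂ν) ≤ _ := step1
        _ = _ := step2
        _ ≤ IA * (|B b| * C) :=
          mul_le_mul_of_nonneg_right step3 (by positivity)
    calc ‖∫ a, ‖A (a - b) * B b * W a‖ ∂ν‖
        = ∫ a, ‖A (a - b) * B b * W a‖ ∂ν :=
          Real.norm_of_nonneg (integral_nonneg fun a => norm_nonneg _)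
      _ ≤ IA * (|B b| * C) := this
      _ = IA * C * |B b| := by ring

lemma master_swap (hASM : StronglyMeasurable A) (hBSM : StronglyMeasurable B)
    (hA0 : ∀ v < (0:ℝ), A v = 0)
    (hAi : ∀ T : ℝ, IntegrableOn A (Ioc 0 T)) (hBi : ∀ T : ℝ, IntegrableOn B (Ioc 0 T))
    (hW : Continuous W) (ht : 0 ≤ t) :
    ∫ a in Ioc (0:ℝ) t, ∫ b in Ioc (0:ℝ) t, A (a - b) * B b * W a
      = ∫ b in Ioc (0:ℝ) t, B b * ∫ c in Ioc 0 (t - b), A c * W (c + b) := by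
  have hsw := integral_integral_swap (f := fun a b => A (a - b) * B b * W a)
    (μ := volume.restrict (Ioc (0:ℝ) t)) (ν := volume.restrict (Ioc (0:ℝ) t))
    (master_int hASM hBSM hA0 hAi hBi hW ht)
  rw [hsw]
  refine setIntegral_congr_fun measurableSet_Ioc ?_
  intro b hb
  have e1 : ∫ a in Ioc (0:ℝ) t, A (a - b) * B b * W a
      = B b * ∫ a in Ioc (0:ℝ) t, A (a - b) * W a := by
    rw [← integral_const_mul]
    exact setIntegral_congr_fun measurableSet_Ioc fun a _ => by ring
  show (∫ a in Ioc (0:ℝ) t, A (a - b) * B b * W a) = _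
  rw [e1, shift_integral hA0 hAi hW hb.1.le hb.2]

lemma master_marg (hASM : StronglyMeasurable A) (hBSM : StronglyMeasurable B)
    (hA0 : ∀ v < (0:ℝ), A v = 0)
    (hAi : ∀ T : ℝ, IntegrableOn A (Ioc 0 T)) (hBi : ∀ T : ℝ, IntegrableOn B (Ioc 0 T))
    (hW : Continuous W) (ht : 0 ≤ t) :
    IntegrableOn (fun a => ∫ b in Ioc (0:ℝ) t, A (a - b) * B b * W a) (Ioc 0 t) :=
  (master_int hASM hBSM hA0 hAi hBi hW ht).integral_prod_left

end Stmt19Aux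

namespace Stmt19Aux

/-- Linear bound on a continuous function with a Cesàro-type limit. -/
lemma linear_bound {G : ℝ → ℝ} (hG : Continuous G) {L : ℝ}
    (hL : Tendsto (fun s => (1/s) * G s) atTop (𝓝 L)) :
    ∃ D : ℝ, 0 ≤ D ∧ ∀ s : ℝ, 0 ≤ s → |G s| ≤ D * (1 + s) := by
  have h1 : ∀ᶠ s in atTop, |(1/s) * G s - L| ≤ 1 := by
    have := hL.eventually (eventually_le_nhds (lt_add_one L) : ∀ᶠ y in 𝓝 L, y ≤ L + 1)
    have h2 := hL.eventually (eventually_ge_nhds (by linarith : L - 1 < L) :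
      ∀ᶠ y in 𝓝 L, L - 1 ≤ y)
    filter_upwards [this, h2] with s hs1 hs2
    rw [abs_le]; constructor <;> linarith
  obtain ⟨T₀, hT₀⟩ := eventually_atTop.mp h1
  set T := max T₀ 1 with hT
  have hT1 : (1:ℝ) ≤ T := le_max_right _ _
  obtain ⟨C, hC⟩ := (isCompact_Icc (a := (0:ℝ)) (b := T)).exists_bound_of_continuousOn
    hG.continuousOn
  have hC0 : 0 ≤ C := le_trans (norm_nonneg _) (hC 0 ⟨le_rfl, by linarith⟩)
  refine ⟨max C (|L| + 1), le_trans hC0 (le_max_left _ _), ?_⟩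
  intro s hs
  rcases le_or_gt s T with h | h
  · calc |G s| ≤ C := hC s ⟨hs, h⟩
      _ ≤ max C (|L| + 1) * 1 := by rw [mul_one]; exact le_max_left _ _
      _ ≤ max C (|L| + 1) * (1 + s) := by
        refine mul_le_mul_of_nonneg_left (by linarith) (le_trans hC0 (le_max_left _ _))
  · have hsT : T₀ ≤ s := le_trans (le_max_left _ _) h.le
    have hs1 : (1:ℝ) ≤ s := le_trans hT1 h.le
    have hs0 : 0 < s := by linarith
    have := hT₀ s hsT
    have habs : |(1/s) * G s| ≤ |L| + 1 := by
      calc |(1/s) * G s| = |(1/s) * G s - L + L| := by ring_nf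
        _ ≤ |(1/s) * G s - L| + |L| := abs_add_le _ _
        _ ≤ |L| + 1 := by linarith
    have : |G s| ≤ (|L| + 1) * s := by
      have he : G s = s * ((1/s) * G s) := by field_simp
      rw [he, abs_mul, abs_of_pos hs0]
      calc s * |(1/s) * G s| ≤ s * (|L| + 1) := mul_le_mul_of_nonneg_left habs hs0.le
        _ = (|L| + 1) * s := by ring
    calc |G s| ≤ (|L| + 1) * s := this
      _ ≤ max C (|L| + 1) * (1 + s) := by
        refine mul_le_mul (le_max_right _ _) (by linarith) hs0.le
          (le_trans hC0 (le_max_left _ _))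

/-- Cesàro limit of the convolution `(1/t) ∫_{(0,t]} h(u) G(t-u) du`. -/
lemma cesaro_conv {h G : ℝ → ℝ} (hh : Integrable h) (hG : Continuous G) {L : ℝ}
    (hL : Tendsto (fun s => (1/s) * G s) atTop (𝓝 L)) :
    Tendsto (fun t => (1/t) * ∫ u in Ioc (0:ℝ) t, h u * G (t - u)) atTop
      (𝓝 (L * ∫ u in Ioi (0:ℝ), h u)) := by
  obtain ⟨D, hD0, hD⟩ := linear_bound hG hL
  set μ₀ := volume.restrict (Ioi (0:ℝ)) with hμ₀
  set F : ℝ → ℝ → ℝ := fun t => (Ioc (0:ℝ) t).indicator (fun u => h u * (G (t - u) / t))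
    with hF
  have key : ∀ t > (0:ℝ), (∫ u, F t u ∂μ₀) = (1/t) * ∫ u in Ioc (0:ℝ) t, h u * G (t - u) := by
    intro t ht
    rw [hF]
    rw [integral_indicator measurableSet_Ioc, Measure.restrict_restrict measurableSet_Ioc,
      inter_eq_left.mpr (Ioc_subset_Ioi_self), ← integral_const_mul]
    exact setIntegral_congr_fun measurableSet_Ioc fun u _ => by ring
  have main : Tendsto (fun t => ∫ u, F t u ∂μ₀) atTop (𝓝 (∫ u, h u * L ∂μ₀)) := by
    refine tendsto_integral_filter_of_dominated_convergence (fun u => 2 * D * |h u|)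
      ?_ ?_ ?_ ?_
    · filter_upwards with t
      exact ((hh.aestronglyMeasurable.restrict.mul
        ((hG.comp (continuous_const.sub continuous_id)).div_const t).aestronglyMeasurable.restrict).indicator
        measurableSet_Ioc)
    · filter_upwards [eventually_ge_atTop (1:ℝ)] with t ht
      filter_upwards with u
      simp only [hF]
      by_cases hu : u ∈ Ioc (0:ℝ) t
      · rw [indicator_of_mem hu]
        have h1 : 0 ≤ t - u := by linarith [hu.2]
        have h2 : |G (t - u)| ≤ D * (1 + t) := by
          refine le_trans (hD _ h1) ?_
          refine mul_le_mul_of_nonneg_left ?_ hD0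
          linarith [hu.1]
        have ht0 : (0:ℝ) < t := by linarith
        calc ‖h u * (G (t - u) / t)‖ = |h u| * (|G (t - u)| / t) := by
              rw [norm_mul, Real.norm_eq_abs, Real.norm_eq_abs, abs_div, abs_of_pos ht0]
          _ ≤ |h u| * (D * (1 + t) / t) := by
              refine mul_le_mul_of_nonneg_left ?_ (abs_nonneg _)
              exact div_le_div_of_nonneg_right h2 ht0.le |>.trans_eq rfl
          _ ≤ |h u| * (2 * D) := by
              refine mul_le_mul_of_nonneg_left ?_ (abs_nonneg _)
              rw [div_le_iff₀ ht0]
              nlinarith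
          _ = 2 * D * |h u| := by ring
      · rw [indicator_of_notMem hu]
        simp only [norm_zero]
        positivity
    · exact ((hh.abs.const_mul (2 * D)).restrict)
    · have hae : ∀ᵐ u ∂μ₀, u ∈ Ioi (0:ℝ) := ae_restrict_mem measurableSet_Ioi
      filter_upwards [hae] with u hu
      have hu0 : (0:ℝ) < u := hu
      have T1 : Tendsto (fun t => (1/(t - u)) * G (t - u)) atTop (𝓝 L) :=
        hL.comp (tendsto_atTop_add_const_right atTop (-u) tendsto_id)
      have T2 : Tendsto (fun t => (t - u) / t) atTop (𝓝 1) := by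
        have : Tendsto (fun t : ℝ => 1 - u / t) atTop (𝓝 (1 - 0)) :=
          tendsto_const_nhds.sub (tendsto_const_nhds.div_atTop tendsto_id)
        rw [sub_zero] at this
        refine this.congr' ?_
        filter_upwards [eventually_gt_atTop (0:ℝ)] with t ht
        field_simp
      have T3 : Tendsto (fun t => G (t - u) / t) atTop (𝓝 L) := by
        have := T1.mul T2
        rw [mul_one] at this
        refine this.congr' ?_
        filter_upwards [eventually_gt_atTop (max u 0 : ℝ)] with t ht
        have h1 : t - u ≠ 0 := by
          have := lt_of_le_of_lt (le_max_left u 0) ht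
          intro hcon; rw [sub_eq_zero] at hcon; exact absurd hcon.symm this.ne
        have h2 : t ≠ 0 := by
          have := lt_of_le_of_lt (le_max_right u 0) ht
          exact this.ne'
        field_simp
      have T4 : Tendsto (fun t => h u * (G (t - u) / t)) atTop (𝓝 (h u * L)) :=
        T3.const_mul (h u)
      refine T4.congr' ?_
      filter_upwards [eventually_ge_atTop u] with t ht
      have hmem : u ∈ Ioc (0:ℝ) t := ⟨hu0, ht⟩
      simp only [hF]
      rw [indicator_of_mem hmem]
  have hval : (∫ u, h u * L ∂μ₀) = L * ∫ u in Ioi (0:ℝ), h u := by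
    rw [mul_comm, ← integral_mul_const]
  refine Tendsto.congr' ?_ (hval ▸ main)
  filter_upwards [eventually_gt_atTop (0:ℝ)] with t ht
  exact key t ht

end Stmt19Aux

open Stmt19Aux

/-- Let `k ∈ L¹([0,∞))` with integrable integral resolvent `r_k` (so
`r_k = k + r_k ∗ k` a.e. on `[0,∞)`), and let `x = f + r_k ∗ f` be the solution of the
perturbed Volterra integral equation. Then `x` has a Cesàro limit iff `f` does; moreover if
`f` has Cesàro limit `L` then `x` has Cesàro limit `L·(1 + ∫₀^∞ r_k)`. -/
theorem stmt19 (k : ℝ → ℝ) (hk : IntegrableOn k (Set.Ici 0))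
    (rk : ℝ → ℝ) (hrk : IntegrableOn rk (Set.Ici 0))
    (hres : ∀ᵐ t ∂(volume.restrict (Set.Ici (0:ℝ))),
      rk t = k t + ∫ s in (0:ℝ)..t, rk (t - s) * k s)
    (f : ℝ → ℝ) (hf : LocallyIntegrableOn f (Set.Ici 0))
    (x : ℝ → ℝ)
    (hx : ∀ t, x t = f t + ∫ s in (0:ℝ)..t, rk (t - s) * f s) :
    ((∃ M : ℝ, Tendsto (fun t => (1/t) * ∫ s in (0:ℝ)..t, x s) atTop (𝓝 M)) ↔
      (∃ L : ℝ, Tendsto (fun t => (1/t) * ∫ s in (0:ℝ)..t, f s) atTop (𝓝 L))) ∧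
    (∀ L : ℝ, Tendsto (fun t => (1/t) * ∫ s in (0:ℝ)..t, f s) atTop (𝓝 L) →
      Tendsto (fun t => (1/t) * ∫ s in (0:ℝ)..t, x s) atTop
        (𝓝 (L * (1 + ∫ s in Set.Ici (0:ℝ), rk s)))) := by
  classical
  -- measurable representatives that vanish on negatives
  have hfm : AEStronglyMeasurable f (volume.restrict (Ici 0)) := hf.aestronglyMeasurable
  set g : ℝ → ℝ := (Ici (0:ℝ)).indicator (hfm.mk f) with hgdef
  have hgSM : StronglyMeasurable g := hfm.stronglyMeasurable_mk.indicator measurableSet_Ici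
  have hg0 : ∀ v < (0:ℝ), g v = 0 := fun v hv => indicator_of_notMem (by simpa using hv) _
  have hfg : f =ᵐ[volume.restrict (Ici 0)] g := by
    filter_upwards [hfm.ae_eq_mk, ae_restrict_mem measurableSet_Ici] with v h1 h2
    rw [h1, hgdef]; exact (indicator_of_mem h2 _).symm
  have hrm : AEStronglyMeasurable rk (volume.restrict (Ici 0)) := hrk.aestronglyMeasurable
  set r : ℝ → ℝ := (Ici (0:ℝ)).indicator (hrm.mk rk) with hrdef
  have hrSM : StronglyMeasurable r := hrm.stronglyMeasurable_mk.indicator measurableSet_Ici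
  have hr0 : ∀ v < (0:ℝ), r v = 0 := fun v hv => indicator_of_notMem (by simpa using hv) _
  have hrkr : rk =ᵐ[volume.restrict (Ici 0)] r := by
    filter_upwards [hrm.ae_eq_mk, ae_restrict_mem measurableSet_Ici] with v h1 h2
    rw [h1, hrdef]; exact (indicator_of_mem h2 _).symm
  have hrInt : Integrable r := by
    have h1 : IntegrableOn (hrm.mk rk) (Ici 0) := hrk.congr hrm.ae_eq_mk
    exact (integrable_indicator_iff measurableSet_Ici).mpr h1
  have hkm : AEStronglyMeasurable k (volume.restrict (Ici 0)) := hk.aestronglyMeasurable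
  set κ : ℝ → ℝ := (Ici (0:ℝ)).indicator (hkm.mk k) with hκdef
  have hκSM : StronglyMeasurable κ := hkm.stronglyMeasurable_mk.indicator measurableSet_Ici
  have hκ0 : ∀ v < (0:ℝ), κ v = 0 := fun v hv => indicator_of_notMem (by simpa using hv) _
  have hkκ : k =ᵐ[volume.restrict (Ici 0)] κ := by
    filter_upwards [hkm.ae_eq_mk, ae_restrict_mem measurableSet_Ici] with v h1 h2
    rw [h1, hκdef]; exact (indicator_of_mem h2 _).symm
  have hκInt : Integrable κ := by
    have h1 : IntegrableOn (hkm.mk k) (Ici 0) := hk.congr hkm.ae_eq_mk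
    exact (integrable_indicator_iff measurableSet_Ici).mpr h1
  -- integrability on bounded intervals
  have hfi : ∀ T : ℝ, IntegrableOn f (Ioc 0 T) := by
    intro T
    rcases le_or_gt T 0 with hT | hT
    · rw [Ioc_eq_empty (by exact fun h => absurd hT (not_le.mpr h))]
      exact integrableOn_empty
    · exact (hf.integrableOn_compact_subset
        (Icc_subset_Ici_self : Icc (0:ℝ) T ⊆ Ici 0) isCompact_Icc).mono_set
        Ioc_subset_Icc_self
  have hgi : ∀ T : ℝ, IntegrableOn g (Ioc 0 T) := fun T =>
    (hfi T).congr (ae_restrict_of_ae_restrict_of_subset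
      (Ioc_subset_Icc_self.trans Icc_subset_Ici_self : Ioc (0:ℝ) T ⊆ Ici 0) hfg)
  have hri : ∀ T : ℝ, IntegrableOn r (Ioc 0 T) := fun T => hrInt.integrableOn
  have hκi : ∀ T : ℝ, IntegrableOn κ (Ioc 0 T) := fun T => hκInt.integrableOn
  -- primitives
  set F : ℝ → ℝ := fun w => ∫ u in Ioc 0 w, g u with hFdef
  have hFcont : Continuous F := continuous_prim g hgi
  set conv₀ : ℝ → ℝ := fun s => ∫ u in Ioc 0 s, r u * g (s - u) with hconvdef
  -- the pointwise identity for x in terms of representatives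
  have hx' : ∀ s : ℝ, 0 ≤ s → x s = f s + conv₀ s := by
    intro s hs
    rw [hx s]
    congr 1
    have e1 : (∫ u in (0:ℝ)..s, rk (s - u) * f u) = ∫ u in Ioc 0 s, rk (s - u) * f u :=
      intervalIntegral.integral_of_le hs
    have e2 : (∫ u in Ioc (0:ℝ) s, rk (s - u) * f u) = ∫ u in Ioc 0 s, r (s - u) * g u := by
      refine integral_congr_ae ?_
      filter_upwards [ae_comp_sub hrkr s,
        ae_restrict_of_ae_restrict_of_subset (Ioc_subset_Icc_self.trans Icc_subset_Ici_self : Ioc (0:ℝ) s ⊆ Ici 0) hfg]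
        with u h1 h2
      rw [h1, h2]
    have e3 : (∫ u in Ioc (0:ℝ) s, r (s - u) * g u) = ∫ u in (0:ℝ)..s, r (s - u) * g u :=
      (intervalIntegral.integral_of_le hs).symm
    have e4 : (∫ u in (0:ℝ)..s, r (s - u) * g u) = ∫ u in (0:ℝ)..s, r u * g (s - u) := by
      have h := intervalIntegral.integral_comp_sub_left (a := 0) (b := s)
        (fun v => r v * g (s - v)) s
      simp only [sub_zero, sub_self] at h
      rw [← h]
      refine intervalIntegral.integral_congr fun u _ => ?_
      simp [sub_sub_cancel]
    have e5 : (∫ u in (0:ℝ)..s, r u * g (s - u)) = conv₀ s :=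
      intervalIntegral.integral_of_le hs
    rw [e1, e2, e3, e4, e5]
  -- integrability of conv₀ and of x
  have hconv_ext : ∀ T : ℝ, 0 ≤ T → ∀ a ∈ Ioc (0:ℝ) T,
      (∫ b in Ioc (0:ℝ) T, g (a - b) * r b * 1) = conv₀ a := by
    intro T hT a ha
    have e1 : (∫ b in Ioc (0:ℝ) T, g (a - b) * r b * 1)
        = ∫ b in Ioc (0:ℝ) T, r b * g (a - b) :=
      setIntegral_congr_fun measurableSet_Ioc fun b _ => by ring
    rw [e1, setIntegral_shrink ha.2 (fun b hb => by rw [hg0 (a - b) (by linarith), mul_zero])]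
  have hconvi : ∀ T : ℝ, IntegrableOn conv₀ (Ioc 0 T) := by
    intro T
    rcases le_or_gt T 0 with hT | hT
    · rw [Ioc_eq_empty (by exact fun h => absurd hT (not_le.mpr h))]
      exact integrableOn_empty
    · have hm := master_marg (W := fun _ => (1:ℝ)) hgSM hrSM hg0 hgi hri continuous_const (t := T) hT.le
      exact hm.congr_fun (fun a ha => hconv_ext T hT.le a ha) measurableSet_Ioc
  have hxi : ∀ T : ℝ, IntegrableOn x (Ioc 0 T) := by
    intro T
    have h0 : IntegrableOn (fun s => f s + conv₀ s) (Ioc 0 T) := (hfi T).add (hconvi T)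
    refine h0.congr_fun (fun s hs => (hx' s hs.1.le).symm) measurableSet_Ioc
  set X : ℝ → ℝ := fun w => ∫ u in Ioc 0 w, x u with hXdef
  have hXcont : Continuous X := continuous_prim x hxi
  set Φ : ℝ → ℝ := fun w => ∫ b in Ioc 0 w, r b * F (w - b) with hΦdef
  -- X = F + Φ on nonnegative reals
  have hXF : ∀ t : ℝ, 0 ≤ t → X t = F t + Φ t := by
    intro t ht
    have e1 : X t = ∫ u in Ioc 0 t, (f u + conv₀ u) :=
      setIntegral_congr_fun measurableSet_Ioc fun s hs => hx' s hs.1.le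
    have e2 : (∫ u in Ioc (0:ℝ) t, (f u + conv₀ u))
        = (∫ u in Ioc (0:ℝ) t, f u) + ∫ u in Ioc (0:ℝ) t, conv₀ u :=
      integral_add (hfi t) (hconvi t)
    have e3 : (∫ u in Ioc (0:ℝ) t, f u) = F t :=
      integral_congr_ae (ae_restrict_of_ae_restrict_of_subset
        (Ioc_subset_Icc_self.trans Icc_subset_Ici_self : Ioc (0:ℝ) t ⊆ Ici 0) hfg)
    have e4 : (∫ u in Ioc (0:ℝ) t, conv₀ u) = Φ t := by
      have h1 : (∫ u in Ioc (0:ℝ) t, conv₀ u)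
          = ∫ a in Ioc (0:ℝ) t, ∫ b in Ioc (0:ℝ) t, g (a - b) * r b * 1 :=
        (setIntegral_congr_fun measurableSet_Ioc fun a ha =>
          (hconv_ext t ht a ha).symm)
      have h2 := master_swap (W := fun _ => (1:ℝ)) hgSM hrSM hg0 hgi hri continuous_const (t := t) ht
      rw [h1, h2]
      refine setIntegral_congr_fun measurableSet_Ioc fun b _ => ?_
      congr 1
      refine (setIntegral_congr_fun measurableSet_Ioc fun c _ => ?_).trans rfl
      rw [mul_one]
    rw [e1, e2, e3, e4]
  have hFneg : ∀ w : ℝ, w < 0 → F w = 0 := by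
    intro w hw
    rw [hFdef]
    simp [Ioc_eq_empty (fun h => absurd hw (not_lt.mpr h.le))]
  have hXneg : ∀ w : ℝ, w < 0 → X w = 0 := by
    intro w hw
    rw [hXdef]
    simp [Ioc_eq_empty (fun h => absurd hw (not_lt.mpr h.le))]
  have hΦneg : ∀ w : ℝ, w < 0 → Φ w = 0 := by
    intro w hw
    rw [hΦdef]
    simp [Ioc_eq_empty (fun h => absurd hw (not_lt.mpr h.le))]
  have hXFΦ : ∀ w : ℝ, X w = F w + Φ w := by
    intro w
    rcases le_or_gt 0 w with hw | hw
    · exact hXF w hw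
    · rw [hFneg w hw, hXneg w hw, hΦneg w hw]; ring
  have hΦfun : Φ = fun w => X w - F w := by
    funext w
    rw [hXFΦ w]; ring
  have hΦcont : Continuous Φ := by
    rw [hΦfun]; exact hXcont.sub hFcont
  -- transfer the resolvent equation to the representatives
  set c' : ℝ → ℝ := fun u => ∫ v in Ioc 0 u, r (u - v) * κ v with hc'def
  have hres2 : ∀ᵐ u ∂(volume.restrict (Ici (0:ℝ))), r u = κ u + c' u := by
    filter_upwards [hres, hrkr, hkκ, ae_restrict_mem measurableSet_Ici] with u h1 h2 h3 hu
    rw [← h2, ← h3, h1]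
    congr 1
    rw [intervalIntegral.integral_of_le hu]
    refine integral_congr_ae ?_
    filter_upwards [ae_comp_sub hrkr u,
      ae_restrict_of_ae_restrict_of_subset
        (Ioc_subset_Icc_self.trans Icc_subset_Ici_self : Ioc (0:ℝ) u ⊆ Ici 0) hkκ]
      with v hv1 hv2
    rw [hv1, hv2]
  have hres3 : ∀ t : ℝ, ∀ᵐ u ∂(volume.restrict (Ioc (0:ℝ) t)), r u = κ u + c' u := fun t =>
    ae_restrict_of_ae_restrict_of_subset
      (Ioc_subset_Icc_self.trans Icc_subset_Ici_self : Ioc (0:ℝ) t ⊆ Ici 0) hres2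
  -- integrability of the pieces
  have hκF : ∀ t : ℝ, IntegrableOn (fun u => κ u * F (t - u)) (Ioc 0 t) := fun t =>
    IntegrableOn.mul_continuousOn_of_subset (hκi t)
      ((hFcont.comp (continuous_const.sub continuous_id)).continuousOn)
      measurableSet_Ioc isCompact_Icc Ioc_subset_Icc_self
  have hκΦ : ∀ t : ℝ, IntegrableOn (fun u => κ u * Φ (t - u)) (Ioc 0 t) := fun t =>
    IntegrableOn.mul_continuousOn_of_subset (hκi t)
      ((hΦcont.comp (continuous_const.sub continuous_id)).continuousOn)
      measurableSet_Ioc isCompact_Icc Ioc_subset_Icc_self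
  have hκX : ∀ t : ℝ, IntegrableOn (fun u => κ u * X (t - u)) (Ioc 0 t) := fun t =>
    IntegrableOn.mul_continuousOn_of_subset (hκi t)
      ((hXcont.comp (continuous_const.sub continuous_id)).continuousOn)
      measurableSet_Ioc isCompact_Icc Ioc_subset_Icc_self
  have hc'F : ∀ t : ℝ, IntegrableOn (fun u => c' u * F (t - u)) (Ioc 0 t) := by
    intro t
    have h1 : IntegrableOn (fun u => (r u - κ u) * F (t - u)) (Ioc 0 t) :=
      IntegrableOn.mul_continuousOn_of_subset ((hri t).sub (hκi t))
        ((hFcont.comp (continuous_const.sub continuous_id)).continuousOn)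
        measurableSet_Ioc isCompact_Icc Ioc_subset_Icc_self
    refine h1.congr ?_
    filter_upwards [hres3 t] with u hu
    rw [hu]; ring
  -- the key identity Φ = κ ⊛ F + κ ⊛ Φ on nonnegative reals
  have hIdent : ∀ t : ℝ, 0 ≤ t →
      Φ t = (∫ u in Ioc (0:ℝ) t, κ u * F (t - u)) + ∫ v in Ioc (0:ℝ) t, κ v * Φ (t - v) := by
    intro t ht
    have e1 : Φ t = ∫ u in Ioc (0:ℝ) t, (κ u * F (t - u) + c' u * F (t - u)) := by
      refine integral_congr_ae ?_
      filter_upwards [hres3 t] with u hu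
      show r u * F (t - u) = _
      rw [hu]; ring
    have e2 : (∫ u in Ioc (0:ℝ) t, (κ u * F (t - u) + c' u * F (t - u)))
        = (∫ u in Ioc (0:ℝ) t, κ u * F (t - u)) + ∫ u in Ioc (0:ℝ) t, c' u * F (t - u) :=
      integral_add (hκF t) (hc'F t)
    have e3 : (∫ u in Ioc (0:ℝ) t, c' u * F (t - u))
        = ∫ v in Ioc (0:ℝ) t, κ v * Φ (t - v) := by
      have hsw := master_swap (W := fun a => F (t - a)) hrSM hκSM hr0 hri hκi
        (hFcont.comp (continuous_const.sub continuous_id)) (t := t) ht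
      have h1 : (∫ u in Ioc (0:ℝ) t, c' u * F (t - u))
          = ∫ a in Ioc (0:ℝ) t, ∫ b in Ioc (0:ℝ) t, r (a - b) * κ b * F (t - a) := by
        refine setIntegral_congr_fun measurableSet_Ioc fun a ha => ?_
        have h2 : (∫ b in Ioc (0:ℝ) t, r (a - b) * κ b * F (t - a))
            = (∫ b in Ioc (0:ℝ) t, r (a - b) * κ b) * F (t - a) := integral_mul_const _ _
        have h3 : (∫ b in Ioc (0:ℝ) t, r (a - b) * κ b)
            = ∫ b in Ioc (0:ℝ) a, r (a - b) * κ b :=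
          setIntegral_shrink ha.2 (fun b hb => by rw [hr0 (a - b) (by linarith), zero_mul])
        rw [h2, h3]
      have h4 : (∫ b in Ioc (0:ℝ) t, κ b * ∫ c in Ioc 0 (t - b), r c * F (t - (c + b)))
          = ∫ v in Ioc (0:ℝ) t, κ v * Φ (t - v) := by
        refine setIntegral_congr_fun measurableSet_Ioc fun b _ => ?_
        congr 1
        refine setIntegral_congr_fun measurableSet_Ioc fun c _ => ?_
        rw [show t - (c + b) = t - b - c by ring]
      rw [h1, hsw, h4]
    rw [e1, e2, e3]
  -- hence F = X - κ ⊛ X on nonnegative reals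
  have hFXΨ : ∀ t : ℝ, 0 ≤ t →
      F t = X t - ∫ v in Ioc (0:ℝ) t, κ v * X (t - v) := by
    intro t ht
    have e1 : (∫ v in Ioc (0:ℝ) t, κ v * X (t - v))
        = ∫ v in Ioc (0:ℝ) t, (κ v * F (t - v) + κ v * Φ (t - v)) := by
      refine setIntegral_congr_fun measurableSet_Ioc fun v _ => ?_
      rw [hXFΦ (t - v)]; ring
    have e2 : (∫ v in Ioc (0:ℝ) t, (κ v * F (t - v) + κ v * Φ (t - v)))
        = (∫ v in Ioc (0:ℝ) t, κ v * F (t - v)) + ∫ v in Ioc (0:ℝ) t, κ v * Φ (t - v) :=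
      integral_add (hκF t) (hκΦ t)
    have e3 := hIdent t ht
    have e4 := hXF t ht
    rw [e1, e2, ← e3, e4]; ring
  -- Cesàro conversions
  set I := ∫ s in Ici (0:ℝ), rk s with hIdef
  have hIr : (∫ u in Ioi (0:ℝ), r u) = I := by
    rw [hIdef, integral_congr_ae hrkr, integral_Ici_eq_integral_Ioi]
  set J := ∫ u in Ioi (0:ℝ), κ u with hJdef
  have convF : ∀ᶠ t in atTop, (1/t) * (∫ s in (0:ℝ)..t, f s) = (1/t) * F t := by
    filter_upwards [eventually_ge_atTop (0:ℝ)] with t ht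
    congr 1
    rw [intervalIntegral.integral_of_le ht]
    exact integral_congr_ae (ae_restrict_of_ae_restrict_of_subset
      (Ioc_subset_Icc_self.trans Icc_subset_Ici_self : Ioc (0:ℝ) t ⊆ Ici 0) hfg)
  have convX : ∀ᶠ t in atTop, (1/t) * (∫ s in (0:ℝ)..t, x s) = (1/t) * X t := by
    filter_upwards [eventually_ge_atTop (0:ℝ)] with t ht
    congr 1
    exact intervalIntegral.integral_of_le ht
  -- forward direction
  have hforward : ∀ L : ℝ, Tendsto (fun t => (1/t) * ∫ s in (0:ℝ)..t, f s) atTop (𝓝 L) →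
      Tendsto (fun t => (1/t) * ∫ s in (0:ℝ)..t, x s) atTop (𝓝 (L * (1 + I))) := by
    intro L hL
    have hF : Tendsto (fun t => (1/t) * F t) atTop (𝓝 L) := hL.congr' convF
    have hc : Tendsto (fun t => (1/t) * ∫ u in Ioc (0:ℝ) t, r u * F (t - u)) atTop
        (𝓝 (L * ∫ u in Ioi (0:ℝ), r u)) := cesaro_conv hrInt hFcont hF
    have hΦlim : Tendsto (fun t => (1/t) * Φ t) atTop (𝓝 (L * I)) := by
      rw [← hIr]; exact hc
    have hXlim : Tendsto (fun t => (1/t) * X t) atTop (𝓝 (L + L * I)) := by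
      have := hF.add hΦlim
      refine this.congr' ?_
      filter_upwards [eventually_ge_atTop (0:ℝ)] with t ht
      rw [hXF t ht]; ring
    have hval : L + L * I = L * (1 + I) := by ring
    rw [hval] at hXlim
    exact hXlim.congr' (by filter_upwards [convX] with t ht using ht.symm)
  -- reverse direction
  have hreverse : ∀ M : ℝ, Tendsto (fun t => (1/t) * ∫ s in (0:ℝ)..t, x s) atTop (𝓝 M) →
      Tendsto (fun t => (1/t) * ∫ s in (0:ℝ)..t, f s) atTop (𝓝 (M - M * J)) := by
    intro M hM
    have hX : Tendsto (fun t => (1/t) * X t) atTop (𝓝 M) := hM.congr' convX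
    have hc : Tendsto (fun t => (1/t) * ∫ u in Ioc (0:ℝ) t, κ u * X (t - u)) atTop
        (𝓝 (M * J)) := cesaro_conv hκInt hXcont hX
    have hFlim : Tendsto (fun t => (1/t) * F t) atTop (𝓝 (M - M * J)) := by
      have := hX.sub hc
      refine this.congr' ?_
      filter_upwards [eventually_ge_atTop (0:ℝ)] with t ht
      rw [hFXΨ t ht]; ring
    exact hFlim.congr' (by filter_upwards [convF] with t ht using ht.symm)
  refine ⟨⟨fun ⟨M, hM⟩ => ⟨M - M * J, hreverse M hM⟩,
    fun ⟨L, hL⟩ => ⟨L * (1 + I), hforward L hL⟩⟩, hforward⟩
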